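/- Let C(U), C(X), C(Z) be pretriangulated categories related by gluing and equipped with weight structures compatible with the gluing. Then the restriction of j^* induces equivalences of categories j^* : C(X)_{w=0,i^*w≤−1} → C(U)_{w=0,∂w≠0} and j^* : C(X)_{w=0,i^!w≥1} → C(U)_{w=0,∂w≠1}. (Remark 0F (a).) -/

import Mathlib

set_option linter.unusedVariables false

open CategoryTheory Limits Pretriangulated

universe w₁ w₂ w₃ w₄ v₁ v₂ v₃ v₄ u₁ u₂ u₃ u₄

/-- A weight structure on a pretriangulated category `C`: a pair of classes of objects
`(C_{w≤0}, C_{w≥0})`, each containing the zero objects and closed under isomorphisms and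
retracts (direct summands), such that `C_{w≤0}[-1] ⊆ C_{w≤0}`, `C_{w≥0}[1] ⊆ C_{w≥0}`,
`Hom(A, B[1]) = 0` for `A ∈ C_{w≤0}`, `B ∈ C_{w≥0}`, and every object admits a weight
filtration. -/
structure WeightStructure (C : Type*) [Category C] [HasZeroObject C] [Preadditive C]
    [HasShift C ℤ] [∀ n : ℤ, (shiftFunctor C n).Additive] [Pretriangulated C] where
  le : C → Prop
  ge : C → Prop
  le_zero : ∀ X : C, IsZero X → le X
  ge_zero : ∀ X : C, IsZero X → ge X
  le_iso : ∀ {X Y : C}, (X ≅ Y) → le X → le Y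
  ge_iso : ∀ {X Y : C}, (X ≅ Y) → ge X → ge Y
  le_retract : ∀ {X Y : C} (s : X ⟶ Y) (r : Y ⟶ X), s ≫ r = 𝟙 X → le Y → le X
  ge_retract : ∀ {X Y : C} (s : X ⟶ Y) (r : Y ⟶ X), s ≫ r = 𝟙 X → ge Y → ge X
  le_shift : ∀ X : C, le X → le (X⟦(-1 : ℤ)⟧)
  ge_shift : ∀ X : C, ge X → ge (X⟦(1 : ℤ)⟧)
  orth : ∀ {A B : C} (f : A ⟶ B⟦(1 : ℤ)⟧), le A → ge B → f = 0
  exists_weight_filtration : ∀ M : C, ∃ (A B : C) (f : A ⟶ M) (g : M ⟶ B)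
    (h : B ⟶ A⟦(1 : ℤ)⟧), (Triangle.mk f g h ∈ distTriang C) ∧ le A ∧ ge (B⟦(-1 : ℤ)⟧)

namespace WeightStructure

variable {C : Type*} [Category C] [HasZeroObject C] [Preadditive C]
    [HasShift C ℤ] [∀ n : ℤ, (shiftFunctor C n).Additive] [Pretriangulated C]

/-- `X ∈ C_{w ≤ n}`, i.e. `X[-n] ∈ C_{w ≤ 0}`. -/
def leW (w : WeightStructure C) (n : ℤ) (X : C) : Prop := w.le (X⟦(-n : ℤ)⟧)

/-- `X ∈ C_{w ≥ n}`, i.e. `X[-n] ∈ C_{w ≥ 0}`. -/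
def geW (w : WeightStructure C) (n : ℤ) (X : C) : Prop := w.ge (X⟦(-n : ℤ)⟧)

/-- The heart `C_{w = 0}`. -/
def heart (w : WeightStructure C) (X : C) : Prop := w.le X ∧ w.ge X

/-- `M` is without weights `m, …, n`: there is a distinguished triangle
`M_{≤ m-1} → M → M_{≥ n+1} → M_{≤ m-1}[1]` with `M_{≤ m-1} ∈ C_{w ≤ m-1}` and
`M_{≥ n+1} ∈ C_{w ≥ n+1}` (a weight filtration avoiding weights `m, …, n`). -/
def WithoutWeights (w : WeightStructure C) (m n : ℤ) (M : C) : Prop :=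
  ∃ (A B : C) (f : A ⟶ M) (g : M ⟶ B) (h : B ⟶ A⟦(1 : ℤ)⟧),
    (Triangle.mk f g h ∈ distTriang C) ∧ w.leW (m - 1) A ∧ w.geW (n + 1) B

end WeightStructure

/-- A weight-exact (exact) functor between pretriangulated categories equipped with
weight structures: `F(C_{w≤0}) ⊆ D_{w≤0}` and `F(C_{w≥0}) ⊆ D_{w≥0}`. -/
def WeightExact {C : Type*} [Category C] [HasZeroObject C] [Preadditive C]
    [HasShift C ℤ] [∀ n : ℤ, (shiftFunctor C n).Additive] [Pretriangulated C]
    {D : Type*} [Category D] [HasZeroObject D] [Preadditive D]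
    [HasShift D ℤ] [∀ n : ℤ, (shiftFunctor D n).Additive] [Pretriangulated D]
    (wC : WeightStructure C) (wD : WeightStructure D) (F : C ⥤ D) : Prop :=
  (∀ X : C, wC.le X → wD.le (F.obj X)) ∧ (∀ X : C, wC.ge X → wD.ge (F.obj X))

variable {CU : Type*} [Category CU] [HasZeroObject CU] [Preadditive CU]
  [HasShift CU ℤ] [∀ n : ℤ, (shiftFunctor CU n).Additive] [Pretriangulated CU]
variable {CX : Type*} [Category CX] [HasZeroObject CX] [Preadditive CX]
  [HasShift CX ℤ] [∀ n : ℤ, (shiftFunctor CX n).Additive] [Pretriangulated CX]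
variable {CZ : Type*} [Category CZ] [HasZeroObject CZ] [Preadditive CZ]
  [HasShift CZ ℤ] [∀ n : ℤ, (shiftFunctor CZ n).Additive] [Pretriangulated CZ]

/- The six gluing functors: `jl = j_!`, `js = j^*`, `jr = j_*`,
   `il = i^*`, `im = i_*`, `ir = i^!`; all of them are exact. -/
variable (jl : CU ⥤ CX) (js : CX ⥤ CU) (jr : CU ⥤ CX)
  (il : CX ⥤ CZ) (im : CZ ⥤ CX) (ir : CX ⥤ CZ)
  [jl.CommShift ℤ] [jl.IsTriangulated] [js.CommShift ℤ] [js.IsTriangulated]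
  [jr.CommShift ℤ] [jr.IsTriangulated] [il.CommShift ℤ] [il.IsTriangulated]
  [im.CommShift ℤ] [im.IsTriangulated] [ir.CommShift ℤ] [ir.IsTriangulated]
  [im.Full] [im.Faithful]
variable (adj₁ : jl ⊣ js) (adj₂ : js ⊣ jr) (adj₃ : il ⊣ im) (adj₄ : im ⊣ ir)

/-- The axioms of a gluing ("recollement") situation relating `C(U)`, `C(X)` and `C(Z)`:
`j^* ∘ i_* = 0`, the unit `id → j^* j_!` and the counit `j^* j_* → id` are isomorphisms,
and the two localization triangles `j_! j^* M → M → i_* i^* M → (j_! j^* M)[1]` and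
`i_* i^! M → M → j_* j^* M → (i_* i^! M)[1]` are distinguished.
(Full faithfulness of `i_*` is part of the ambient variable context.) -/
structure IsGluing : Prop where
  js_im_zero : ∀ Z : CZ, IsZero (js.obj (im.obj Z))
  unit_iso : IsIso adj₁.unit
  counit_iso : IsIso adj₂.counit
  tri₁ : ∀ M : CX, ∃ δ : im.obj (il.obj M) ⟶ (jl.obj (js.obj M))⟦(1 : ℤ)⟧,
    Triangle.mk (adj₁.counit.app M) (adj₃.unit.app M) δ ∈ distTriang CX
  tri₂ : ∀ M : CX, ∃ δ : jr.obj (js.obj M) ⟶ (im.obj (ir.obj M))⟦(1 : ℤ)⟧,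
    Triangle.mk (adj₄.counit.app M) (adj₂.unit.app M) δ ∈ distTriang CX

variable (wU : WeightStructure CU) (wX : WeightStructure CX) (wZ : WeightStructure CZ)

/-- Compatibility of the weight structures on `C(U)`, `C(X)`, `C(Z)` with the gluing:
the left adjoints `j_!`, `j^*`, `i^*`, `i_*` respect `(w ≤ 0)`, and the right adjoints
`j^*`, `j_*`, `i_*`, `i^!` respect `(w ≥ 0)`. -/
structure GluedWeights : Prop where
  jl_le : ∀ X : CU, wU.le X → wX.le (jl.obj X)
  js_le : ∀ X : CX, wX.le X → wU.le (js.obj X)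
  js_ge : ∀ X : CX, wX.ge X → wU.ge (js.obj X)
  il_le : ∀ X : CX, wX.le X → wZ.le (il.obj X)
  im_le : ∀ X : CZ, wZ.le X → wX.le (im.obj X)
  im_ge : ∀ X : CZ, wZ.ge X → wX.ge (im.obj X)
  jr_ge : ∀ X : CU, wU.ge X → wX.ge (jr.obj X)
  ir_ge : ∀ X : CX, wX.ge X → wZ.ge (ir.obj X)


section Aux

namespace WeightStructure

variable {C : Type*} [Category C] [HasZeroObject C] [Preadditive C]
    [HasShift C ℤ] [∀ n : ℤ, (shiftFunctor C n).Additive] [Pretriangulated C]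
variable (w : WeightStructure C)

lemma le_shift_congr {m n : ℤ} (h : m = n) {X : C} (hX : w.le (X⟦m⟧)) : w.le (X⟦n⟧) := by
  subst h; exact hX

lemma ge_shift_congr {m n : ℤ} (h : m = n) {X : C} (hX : w.ge (X⟦m⟧)) : w.ge (X⟦n⟧) := by
  subst h; exact hX

lemma le_of_le_shift {X : C} (h : w.le (X⟦(1:ℤ)⟧)) : w.le X :=
  w.le_iso ((shiftFunctorCompIsoId C (1:ℤ) (-1:ℤ) (by norm_num)).app X) (w.le_shift _ h)

lemma ge_of_ge_shift {X : C} (h : w.ge (X⟦(-1:ℤ)⟧)) : w.ge X :=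
  w.ge_iso ((shiftFunctorCompIsoId C (-1:ℤ) (1:ℤ) (by norm_num)).app X) (w.ge_shift _ h)

lemma hom_zero_of_le_of_ge {A B : C} (hA : w.le A) (hB : w.ge (B⟦(-1:ℤ)⟧)) (f : A ⟶ B) :
    f = 0 := by
  have h2 : f ≫ ((shiftFunctorCompIsoId C (-1:ℤ) (1:ℤ) (by norm_num)).app B).inv = 0 :=
    w.orth _ hA hB
  have := h2 =≫ ((shiftFunctorCompIsoId C (-1:ℤ) (1:ℤ) (by norm_num)).app B).hom
  simpa using this

lemma hom_zero_of_le_shift_of_ge {A B : C} (hA : w.le (A⟦(1:ℤ)⟧)) (hB : w.ge B) (f : A ⟶ B) :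
    f = 0 := by
  have h2 : (shiftFunctor C (1:ℤ)).map f = 0 := w.orth _ hA hB
  exact (shiftFunctor C (1:ℤ)).map_injective (by rw [h2, Functor.map_zero])

lemma ge_of_forall_hom_zero {Y : C}
    (hY : ∀ (T : C) (f : T ⟶ Y), w.le (T⟦(1:ℤ)⟧) → f = 0) : w.ge Y := by
  obtain ⟨A, B, f, g, h, hT, hA, hB⟩ := w.exists_weight_filtration (Y⟦(1:ℤ)⟧)
  have hT' := Triangle.shift_distinguished _ hT (-1)
  set S := (Triangle.shiftFunctor C (-1:ℤ)).obj (Triangle.mk f g h) with hS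
  let e : S.obj₂ ≅ Y := (shiftFunctorCompIsoId C (1:ℤ) (-1:ℤ) (by norm_num)).app Y
  let S' : Triangle C := Triangle.mk (S.mor₁ ≫ e.hom) (e.inv ≫ S.mor₂) S.mor₃
  have hS' : S' ∈ distTriang C := by
    refine isomorphic_distinguished _ hT' _ ?_
    exact Triangle.isoMk S' S (Iso.refl _) e.symm (Iso.refl _) (by exact (by simp : (S.mor₁ ≫ e.hom) ≫ e.inv = S.mor₁).trans (Category.id_comp _).symm)
      (by exact Category.comp_id _)
      (by exact (by simp : S.mor₃ ≫ (shiftFunctor C 1).map (𝟙 S.obj₁) = S.mor₃).trans (Category.id_comp _).symm)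
  have hmor₁ : S'.mor₁ = 0 := by
    apply hY
    exact w.le_iso ((shiftFunctorCompIsoId C (-1:ℤ) (1:ℤ) (by norm_num)).app A).symm hA
  obtain ⟨r, hr⟩ := Triangle.yoneda_exact₂ _ hS' (𝟙 Y) (by rw [hmor₁]; exact zero_comp)
  refine w.ge_retract S'.mor₂ r hr.symm ?_
  exact w.ge_iso ((shiftFunctor C (-1:ℤ)).mapIso (Iso.refl _)) hB

lemma ge_ext (T : Triangle C) (hT : T ∈ distTriang C)
    (h₁ : w.ge T.obj₁) (h₃ : w.ge T.obj₃) : w.ge T.obj₂ := by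
  apply w.ge_of_forall_hom_zero
  intro X f hX
  obtain ⟨g, rfl⟩ := Triangle.coyoneda_exact₂ T hT f (w.hom_zero_of_le_shift_of_ge hX h₃ _)
  rw [w.hom_zero_of_le_shift_of_ge hX h₁ g, zero_comp]

lemma le_of_forall_hom_zero {Y : C}
    (hY : ∀ (T : C) (f : Y ⟶ T), w.ge (T⟦(-1:ℤ)⟧) → f = 0) : w.le Y := by
  obtain ⟨A, B, f, g, h, hT, hA, hB⟩ := w.exists_weight_filtration Y
  obtain ⟨s, hs⟩ := Triangle.coyoneda_exact₂ _ hT (𝟙 Y)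
    (by exact (Category.id_comp g).trans (hY B g hB))
  exact w.le_retract s f hs.symm hA

lemma le_ext (T : Triangle C) (hT : T ∈ distTriang C)
    (h₁ : w.le T.obj₁) (h₃ : w.le T.obj₃) : w.le T.obj₂ := by
  apply w.le_of_forall_hom_zero
  intro X f hX
  obtain ⟨g, rfl⟩ := Triangle.yoneda_exact₂ T hT f (w.hom_zero_of_le_of_ge h₁ hX _)
  rw [w.hom_zero_of_le_of_ge h₃ hX g, comp_zero]

end WeightStructure

lemma adj_hom_zero_right {C D : Type*} [Category C] [Category D]
    [Limits.HasZeroMorphisms C] [Limits.HasZeroMorphisms D]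
    {F : C ⥤ D} {G : D ⥤ C} (adj : F ⊣ G) [G.PreservesZeroMorphisms] {X : C} {Y : D}
    (f : X ⟶ G.obj Y) (h : (adj.homEquiv X Y).symm f = 0) : f = 0 := by
  rw [← (adj.homEquiv X Y).apply_symm_apply f, h, Adjunction.homEquiv_unit,
    Functor.map_zero, comp_zero]

lemma adj_hom_zero_left {C D : Type*} [Category C] [Category D]
    [Limits.HasZeroMorphisms C] [Limits.HasZeroMorphisms D]
    {F : C ⥤ D} {G : D ⥤ C} (adj : F ⊣ G) [F.PreservesZeroMorphisms] {X : C} {Y : D}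
    (f : F.obj X ⟶ Y) (h : adj.homEquiv X Y f = 0) : f = 0 := by
  rw [← (adj.homEquiv X Y).symm_apply_apply f, h, Adjunction.homEquiv_counit,
    Functor.map_zero, zero_comp]

/-- If two distinguished triangles agree (up to isomorphism) in their second and third
objects and second morphism, their first objects are isomorphic. -/
lemma iso₁_of_distTriang {C : Type*} [Category C] [HasZeroObject C] [Preadditive C]
    [HasShift C ℤ] [∀ n : ℤ, (shiftFunctor C n).Additive] [Pretriangulated C]
    (S S' : Triangle C) (hS : S ∈ distTriang C) (hS' : S' ∈ distTriang C)
    (e₂ : S.obj₂ ≅ S'.obj₂) (e₃ : S.obj₃ ≅ S'.obj₃)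
    (comm : S.mor₂ ≫ e₃.hom = e₂.hom ≫ S'.mor₂) : Nonempty (S.obj₁ ≅ S'.obj₁) := by
  have h := isoTriangleOfIso₁₂ S.rotate S'.rotate (rot_of_distTriang _ hS)
    (rot_of_distTriang _ hS') e₂ e₃ comm
  exact ⟨(shiftFunctor C (1:ℤ)).preimageIso (Triangle.π₃.mapIso h)⟩

end Aux


section Aux2

/-- Full faithfulness of `j^*`, first case: `i^* M ∈ w ≤ -1`, `N ∈ w ≥ 0`. -/
lemma js_map_bijective₁
    (hglue : IsGluing jl js jr il im ir adj₁ adj₂ adj₃ adj₄)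
    (hw : GluedWeights jl js jr il im ir wU wX wZ)
    {M N : CX} (hM : wZ.le ((il.obj M)⟦(1:ℤ)⟧)) (hN : wX.ge N) :
    Function.Bijective (fun f : M ⟶ N => js.map f) := by
  obtain ⟨δ, hT⟩ := hglue.tri₂ N
  have virN : wZ.ge (ir.obj N) := hw.ir_ge N hN
  have key : (fun f : M ⟶ N => js.map f) =
      fun f => (adj₂.homEquiv M (js.obj N)).symm (f ≫ adj₂.unit.app N) := by
    funext f
    apply (adj₂.homEquiv M (js.obj N)).injective
    rw [Equiv.apply_symm_apply, Adjunction.homEquiv_unit]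
    exact (adj₂.unit.naturality f).symm
  rw [key]
  refine (Equiv.bijective _).comp ⟨?_, ?_⟩
  · intro f₁ f₂ h
    have h0 : (f₁ - f₂) ≫ adj₂.unit.app N = 0 := by
      rw [Preadditive.sub_comp, show f₁ ≫ adj₂.unit.app N = f₂ ≫ adj₂.unit.app N from h,
        sub_self]
    obtain ⟨g, hg⟩ := Triangle.coyoneda_exact₂ _ hT (f₁ - f₂) h0
    have hg0 : g = 0 := adj_hom_zero_right adj₃ g
      (wZ.hom_zero_of_le_shift_of_ge hM virN _)
    rw [hg0, zero_comp] at hg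
    exact sub_eq_zero.1 hg
  · intro k
    have hk : k ≫ δ = 0 := by
      have h0 : k ≫ δ ≫ ((im.commShiftIso (1:ℤ)).app (ir.obj N)).inv = 0 :=
        adj_hom_zero_right adj₃ _ (wZ.orth _ (wZ.le_of_le_shift hM) virN)
      have h1 := h0 =≫ ((im.commShiftIso (1:ℤ)).app (ir.obj N)).hom
      simpa using h1
    obtain ⟨g, hg⟩ := Triangle.coyoneda_exact₃ _ hT k hk
    exact ⟨g, hg.symm⟩

/-- Full faithfulness of `j^*`, second case: `M ∈ w ≤ 0`, `i^! N ∈ w ≥ 1`. -/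
lemma js_map_bijective₂
    (hglue : IsGluing jl js jr il im ir adj₁ adj₂ adj₃ adj₄)
    (hw : GluedWeights jl js jr il im ir wU wX wZ)
    {M N : CX} (hM : wX.le M) (hN : wZ.ge ((ir.obj N)⟦(-1:ℤ)⟧)) :
    Function.Bijective (fun f : M ⟶ N => js.map f) := by
  obtain ⟨δ, hT⟩ := hglue.tri₁ M
  have hilM : wZ.le (il.obj M) := hw.il_le M hM
  have key : (fun f : M ⟶ N => js.map f) =
      fun f => adj₁.homEquiv (js.obj M) N (adj₁.counit.app M ≫ f) := by
    funext f
    rw [Adjunction.homEquiv_unit, Functor.map_comp, ← Category.assoc,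
      adj₁.right_triangle_components, Category.id_comp]
  rw [key]
  refine (Equiv.bijective _).comp ⟨?_, ?_⟩
  · intro f₁ f₂ h
    have h0 : adj₁.counit.app M ≫ (f₁ - f₂) = 0 := by
      rw [Preadditive.comp_sub, show adj₁.counit.app M ≫ f₁ = adj₁.counit.app M ≫ f₂ from h,
        sub_self]
    obtain ⟨g, hg⟩ := Triangle.yoneda_exact₂ _ hT (f₁ - f₂) h0
    have hg0 : g = 0 := adj_hom_zero_left adj₄ g (wZ.hom_zero_of_le_of_ge hilM hN _)
    rw [hg0, comp_zero] at hg
    exact sub_eq_zero.1 hg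
  · intro k
    have hz : ∀ hmor : (im.obj (il.obj M))⟦(-1:ℤ)⟧ ⟶ N, hmor = 0 := by
      intro hmor
      have h0 : ((im.commShiftIso (-1:ℤ)).app (il.obj M)).hom ≫ hmor = 0 :=
        adj_hom_zero_left adj₄ _ (wZ.hom_zero_of_le_of_ge (wZ.le_shift _ hilM) hN _)
      calc hmor = ((im.commShiftIso (-1:ℤ)).app (il.obj M)).inv ≫
            (((im.commShiftIso (-1:ℤ)).app (il.obj M)).hom ≫ hmor) := by simp
        _ = 0 := by rw [h0, comp_zero]
    obtain ⟨g, hg⟩ := Triangle.yoneda_exact₂ _ (inv_rot_of_distTriang _ hT) k (hz _)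
    exact ⟨g, hg.symm⟩

/-- The essential surjectivity construction: given `M_U` in the heart of `C(U)` and a
weight decomposition `A → i^* j_* M_U → B` of `i^* j_* M_U`, we construct `M ∈ C(X)` with
`j^* M ≅ M_U`, `i^* M ≅ A`, `i^! M ≅ B⟦-1⟧`, and `M` in the heart of `C(X)`. -/
lemma construct_extension
    (hglue : IsGluing jl js jr il im ir adj₁ adj₂ adj₃ adj₄)
    (hw : GluedWeights jl js jr il im ir wU wX wZ)
    (M_U : CU) (hle : wU.le M_U) (hge : wU.ge M_U)
    {A B : CZ} (a : A ⟶ il.obj (jr.obj M_U)) (g : il.obj (jr.obj M_U) ⟶ B)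
    (b : B ⟶ A⟦(1:ℤ)⟧) (hTw : Triangle.mk a g b ∈ distTriang CZ)
    (hA : wZ.le A) (hBge : wZ.ge (B⟦(-1:ℤ)⟧)) :
    ∃ (M : CX) (e : js.obj M ≅ M_U) (eA : il.obj M ≅ A) (eB : ir.obj M ≅ B⟦(-1:ℤ)⟧),
      wX.le M ∧ wX.ge M := by
  have hcounit₂ : IsIso adj₂.counit := hglue.counit_iso
  obtain ⟨M, α, θ, hTM⟩ := distinguished_cocone_triangle₁
    (adj₃.unit.app (jr.obj M_U) ≫ im.map g)
  -- `js.map α` is an isomorphism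
  have hTU := js.map_distinguished _ hTM
  have hz3 : IsZero (js.mapTriangle.obj
      (Triangle.mk α (adj₃.unit.app (jr.obj M_U) ≫ im.map g) θ)).obj₃ := hglue.js_im_zero B
  have hiso : IsIso (js.map α) := (Triangle.isZero₃_iff_isIso₁ _ hTU).1 hz3
  let e : js.obj M ≅ M_U := asIso (js.map α) ≪≫ asIso (adj₂.counit.app M_U)
  -- identify `i^* M` with `A`
  have hTZ := il.map_distinguished _ hTM
  have hcomp : il.map (adj₃.unit.app (jr.obj M_U) ≫ im.map g) ≫ adj₃.counit.app B = g := by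
    rw [Functor.map_comp, Category.assoc, ← Functor.comp_map im il,
      adj₃.counit.naturality g]
    simp
  obtain ⟨eA⟩ := iso₁_of_distTriang _ _ hTZ hTw (Iso.refl _) (@asIso _ _ _ _ (adj₃.counit.app B) (NatIso.isIso_app_of_isIso adj₃.counit B))
    (by exact hcomp.trans (Category.id_comp g).symm)
  -- `M` is in the heart
  have hle_M : wX.le M := by
    obtain ⟨δ', hT₁⟩ := hglue.tri₁ M
    refine wX.le_ext _ hT₁ ?_ ?_
    · exact wX.le_iso (jl.mapIso e.symm) (hw.jl_le M_U hle)
    · exact hw.im_le _ (wZ.le_iso eA.symm hA)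
  have hge_M : wX.ge M := by
    refine wX.ge_ext _ (inv_rot_of_distTriang _ hTM) ?_ ?_
    · exact wX.ge_iso ((im.commShiftIso (-1:ℤ)).app B) (hw.im_ge _ hBge)
    · exact hw.jr_ge M_U hge
  -- identify `i^! M` with `B⟦-1⟧`
  obtain ⟨δ₂, hT₂⟩ := hglue.tri₂ M
  have halpha : adj₂.unit.app M ≫ jr.map e.hom = α := by
    have h1 : α = adj₂.unit.app M ≫ jr.map (js.map α ≫ adj₂.counit.app M_U) := by
      rw [Functor.map_comp, ← Category.assoc, ← Functor.comp_map js jr,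
        ← adj₂.unit.naturality α]
      simp
    rw [h1]
    simp [e]
  have hS : Triangle.mk (adj₄.counit.app M) α ((jr.mapIso e).inv ≫ δ₂) ∈ distTriang CX := by
    refine isomorphic_distinguished _ hT₂ _ ?_
    refine Triangle.isoMk _ _ (Iso.refl _) (Iso.refl _) (jr.mapIso e).symm ?_ ?_ ?_
    · exact (Category.comp_id _).trans (Category.id_comp _).symm
    · simp only [Triangle.mk_obj₂, Triangle.mk_mor₂, Iso.refl_hom, Iso.symm_hom,
        Functor.mapIso_inv, Category.id_comp, ← halpha, Category.assoc, ← Functor.map_comp,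
        Iso.hom_inv_id, Functor.map_id, Category.comp_id]
      exact (by simp : (adj₂.unit.app M ≫ jr.map e.hom) ≫ jr.map e.inv = adj₂.unit.app M).trans
        (Category.id_comp _).symm
    · exact (by simp : (jr.map e.inv ≫ δ₂) ≫ (shiftFunctor CX 1).map (𝟙 (im.obj (ir.obj M))) =
        jr.map e.inv ≫ δ₂)
  obtain ⟨eB'⟩ := iso₁_of_distTriang _ _ hS (inv_rot_of_distTriang _ hTM)
    (Iso.refl M) (Iso.refl _) (by exact (Category.comp_id α).trans (Category.id_comp α).symm)
  -- `eB' : im.obj (ir.obj M) ≅ (im.obj B)⟦-1⟧`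
  have hunit₄ : IsIso (adj₄.unit.app (ir.obj M)) := inferInstance
  have hunit₄B : IsIso (adj₄.unit.app B) := inferInstance
  refine ⟨M, e, eA, ?_, hle_M, hge_M⟩
  exact asIso (adj₄.unit.app (ir.obj M)) ≪≫ ir.mapIso eB' ≪≫
    (ir.commShiftIso (-1:ℤ)).app (im.obj B) ≪≫
    (shiftFunctor CZ (-1:ℤ)).mapIso (asIso (adj₄.unit.app B)).symm

end Aux2

/-- **Remark 0F (a).** The restriction of `j^*` induces equivalences of categories
`C(X)_{w=0, i^*w ≤ -1} ≃ C(U)_{w=0, ∂w ≠ 0}` and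
`C(X)_{w=0, i^!w ≥ 1} ≃ C(U)_{w=0, ∂w ≠ 1}`. -/
theorem restriction_of_js_one_sided_equivalences
    (hglue : IsGluing jl js jr il im ir adj₁ adj₂ adj₃ adj₄)
    (hw : GluedWeights jl js jr il im ir wU wX wZ) :
    (∃ h : ∀ M : ObjectProperty.FullSubcategory (fun M : CX => wX.heart M ∧ wZ.leW (-1) (il.obj M)),
        wU.heart (js.obj M.obj) ∧ wZ.WithoutWeights 0 0 (il.obj (jr.obj (js.obj M.obj))),
      (ObjectProperty.lift
        (fun MU : CU => wU.heart MU ∧ wZ.WithoutWeights 0 0 (il.obj (jr.obj MU)))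
        (ObjectProperty.ι
          (fun M : CX => wX.heart M ∧ wZ.leW (-1) (il.obj M)) ⋙ js)
        h).IsEquivalence) ∧
    (∃ h : ∀ M : ObjectProperty.FullSubcategory (fun M : CX => wX.heart M ∧ wZ.geW 1 (ir.obj M)),
        wU.heart (js.obj M.obj) ∧ wZ.WithoutWeights 1 1 (il.obj (jr.obj (js.obj M.obj))),
      (ObjectProperty.lift
        (fun MU : CU => wU.heart MU ∧ wZ.WithoutWeights 1 1 (il.obj (jr.obj MU)))
        (ObjectProperty.ι
          (fun M : CX => wX.heart M ∧ wZ.geW 1 (ir.obj M)) ⋙ js)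
        h).IsEquivalence) := by
  constructor
  · -- first equivalence
    have hmap : ∀ M : ObjectProperty.FullSubcategory (fun M : CX => wX.heart M ∧ wZ.leW (-1) (il.obj M)),
        wU.heart (js.obj M.obj) ∧ wZ.WithoutWeights 0 0 (il.obj (jr.obj (js.obj M.obj))) := by
      intro M
      obtain ⟨hM, hM'⟩ := M.property
      refine ⟨⟨hw.js_le _ hM.1, hw.js_ge _ hM.2⟩, ?_⟩
      obtain ⟨δ, hT⟩ := hglue.tri₂ M.obj
      have hS := rot_of_distTriang _ (il.map_distinguished _ hT)
      have c1 : wZ.leW (0-1) (il.obj M.obj) := wZ.le_shift_congr (by norm_num) hM'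
      have hYge : wZ.ge (il.obj (im.obj (ir.obj M.obj))) :=
        wZ.ge_iso (asIso (adj₃.counit.app (ir.obj M.obj))).symm (hw.ir_ge _ hM.2)
      have c2 : wZ.geW (0+1) ((il.obj (im.obj (ir.obj M.obj)))⟦(1:ℤ)⟧) :=
        wZ.ge_iso ((shiftFunctorCompIsoId CZ (1:ℤ) (-(0+1):ℤ) (by norm_num)).app
          (il.obj (im.obj (ir.obj M.obj)))).symm hYge
      exact ⟨_, _, _, _, _, hS, c1, c2⟩
    have hfaith : ∀ (M N : ObjectProperty.FullSubcategory (fun M : CX => wX.heart M ∧ wZ.leW (-1) (il.obj M))),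
        Function.Bijective (fun f : M.obj ⟶ N.obj => js.map f) := fun M N =>
      js_map_bijective₁ jl js jr il im ir adj₁ adj₂ adj₃ adj₄ wU wX wZ hglue hw
        (wZ.le_shift_congr (by norm_num) M.property.2) N.property.1.2
    have hsurj : ∀ MU : ObjectProperty.FullSubcategory
        (fun MU : CU => wU.heart MU ∧ wZ.WithoutWeights 0 0 (il.obj (jr.obj MU))),
        ∃ (M : CX) (e : js.obj M ≅ MU.obj), wX.heart M ∧ wZ.leW (-1) (il.obj M) := by
      intro MU
      obtain ⟨A, B, a, g, b, hT, hA, hB⟩ := MU.property.2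
      have hA1 : wZ.le (A⟦(1:ℤ)⟧) := wZ.le_shift_congr (by norm_num) hA
      have hAle : wZ.le A := wZ.le_of_le_shift hA1
      have hB1 : wZ.ge (B⟦(-1:ℤ)⟧) := wZ.ge_shift_congr (by norm_num) hB
      obtain ⟨M, e, eA, eB, hMle, hMge⟩ := construct_extension jl js jr il im ir
        adj₁ adj₂ adj₃ adj₄ wU wX wZ hglue hw MU.obj MU.property.1.1 MU.property.1.2
        a g b hT hAle hB1
      refine ⟨M, e, ⟨hMle, hMge⟩, ?_⟩
      exact wZ.le_iso ((shiftFunctor CZ (-(-1):ℤ)).mapIso eA).symm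
        (wZ.le_shift_congr (by norm_num) hA)
    refine ⟨hmap, ?_⟩
    refine { faithful := ⟨fun {M N} {f g} h => by
               ext; exact (hfaith M N).injective (congrArg (fun x => x.hom) h)⟩,
             full := ⟨fun {M N} f => ⟨ObjectProperty.homMk ((hfaith M N).surjective f.hom).choose,
               by ext; exact ((hfaith M N).surjective f.hom).choose_spec⟩⟩,
             essSurj := ⟨?_⟩ }
    intro MU
    obtain ⟨M, e, hM⟩ := hsurj MU
    exact ⟨⟨M, hM⟩, ⟨ObjectProperty.isoMk _ e⟩⟩
  · -- second equivalence
    have hmap : ∀ M : ObjectProperty.FullSubcategory (fun M : CX => wX.heart M ∧ wZ.geW 1 (ir.obj M)),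
        wU.heart (js.obj M.obj) ∧ wZ.WithoutWeights 1 1 (il.obj (jr.obj (js.obj M.obj))) := by
      intro M
      obtain ⟨hM, hM'⟩ := M.property
      refine ⟨⟨hw.js_le _ hM.1, hw.js_ge _ hM.2⟩, ?_⟩
      obtain ⟨δ, hT⟩ := hglue.tri₂ M.obj
      have hS := rot_of_distTriang _ (il.map_distinguished _ hT)
      have c1 : wZ.leW (1-1) (il.obj M.obj) :=
        wZ.le_iso ((shiftFunctorZero' CZ (-(1-1):ℤ) (by norm_num)).app (il.obj M.obj)).symm
          (hw.il_le _ hM.1)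
      have hYge1 : wZ.ge ((il.obj (im.obj (ir.obj M.obj)))⟦(-1:ℤ)⟧) := by
        refine wZ.ge_iso ((shiftFunctor CZ (-1:ℤ)).mapIso
          (asIso (adj₃.counit.app (ir.obj M.obj)))).symm ?_
        exact wZ.ge_shift_congr (by norm_num) hM'
      have c2 : wZ.geW (1+1) ((il.obj (im.obj (ir.obj M.obj)))⟦(1:ℤ)⟧) :=
        wZ.ge_iso ((shiftFunctorAdd' CZ (1:ℤ) (-(1+1):ℤ) (-1:ℤ) (by norm_num)).app
          (il.obj (im.obj (ir.obj M.obj)))) hYge1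
      exact ⟨_, _, _, _, _, hS, c1, c2⟩
    have hfaith : ∀ (M N : ObjectProperty.FullSubcategory (fun M : CX => wX.heart M ∧ wZ.geW 1 (ir.obj M))),
        Function.Bijective (fun f : M.obj ⟶ N.obj => js.map f) := fun M N =>
      js_map_bijective₂ jl js jr il im ir adj₁ adj₂ adj₃ adj₄ wU wX wZ hglue hw
        M.property.1.1 (wZ.ge_shift_congr (by norm_num) N.property.2)
    have hsurj : ∀ MU : ObjectProperty.FullSubcategory
        (fun MU : CU => wU.heart MU ∧ wZ.WithoutWeights 1 1 (il.obj (jr.obj MU))),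
        ∃ (M : CX) (e : js.obj M ≅ MU.obj), wX.heart M ∧ wZ.geW 1 (ir.obj M) := by
      intro MU
      obtain ⟨A, B, a, g, b, hT, hA, hB⟩ := MU.property.2
      have hAle : wZ.le A :=
        wZ.le_iso ((shiftFunctorZero' CZ (-(1-1):ℤ) (by norm_num)).app A) hA
      have hB2 : wZ.ge (B⟦(-2:ℤ)⟧) := wZ.ge_shift_congr (by norm_num) hB
      have hB1 : wZ.ge (B⟦(-1:ℤ)⟧) :=
        wZ.ge_iso ((shiftFunctorAdd' CZ (-2:ℤ) (1:ℤ) (-1:ℤ) (by norm_num)).app B).symm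
          (wZ.ge_shift _ hB2)
      obtain ⟨M, e, eA, eB, hMle, hMge⟩ := construct_extension jl js jr il im ir
        adj₁ adj₂ adj₃ adj₄ wU wX wZ hglue hw MU.obj MU.property.1.1 MU.property.1.2
        a g b hT hAle hB1
      refine ⟨M, e, ⟨hMle, hMge⟩, ?_⟩
      refine wZ.ge_iso ((shiftFunctor CZ (-1:ℤ)).mapIso eB).symm ?_
      exact wZ.ge_iso ((shiftFunctorAdd' CZ (-1:ℤ) (-1:ℤ) (-2:ℤ) (by norm_num)).app B) hB2
    refine ⟨hmap, ?_⟩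
    refine { faithful := ⟨fun {M N} {f g} h => by
               ext; exact (hfaith M N).injective (congrArg (fun x => x.hom) h)⟩,
             full := ⟨fun {M N} f => ⟨ObjectProperty.homMk ((hfaith M N).surjective f.hom).choose,
               by ext; exact ((hfaith M N).surjective f.hom).choose_spec⟩⟩,
             essSurj := ⟨?_⟩ }
    intro MU
    obtain ⟨M, e, hM⟩ := hsurj MU
    exact ⟨⟨M, hM⟩, ⟨ObjectProperty.isoMk _ e⟩⟩
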